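/- Let s : L → L' be a strict contraction (‖s‖ < 1) and S = [[I_{L'}, s],[s*, I_L]] on L' ⊕ L. Then S is invertible and for all ℓ' ∈ L', ℓ ∈ L: ⟨S⁻¹(ℓ' ⊕ ℓ), ℓ' ⊕ ℓ⟩ = ⟨ℓ', ℓ'⟩ + ⟨(I_L - s*s)⁻¹(ℓ - s*ℓ'), ℓ - s*ℓ'⟩. -/

import Mathlib

open scoped InnerProductSpace

/-- The block operator `S = [[I, s],[s*, I]]` on the Hilbert-space direct sum `L' ⊕ L`,
acting by `S(ℓ' ⊕ ℓ) = (ℓ' + sℓ) ⊕ (s*ℓ' + ℓ)`. -/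
noncomputable def blockOp (L L' : Type*) [NormedAddCommGroup L] [InnerProductSpace ℂ L]
    [CompleteSpace L] [NormedAddCommGroup L'] [InnerProductSpace ℂ L'] [CompleteSpace L']
    (s : L →L[ℂ] L') : WithLp 2 (L' × L) →L[ℂ] WithLp 2 (L' × L) :=
  letI e := WithLp.prodContinuousLinearEquiv 2 ℂ L' L
  (e.symm.toContinuousLinearMap) ∘L
    (((ContinuousLinearMap.fst ℂ L' L + s ∘L ContinuousLinearMap.snd ℂ L' L).prod
      ((ContinuousLinearMap.adjoint s) ∘L ContinuousLinearMap.fst ℂ L' L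
        + ContinuousLinearMap.snd ℂ L' L)) ∘L e.toContinuousLinearMap)

/-- For a strict contraction `s : L → L'`, the block operator `S = [[I, s],[s*, I]]` is
invertible, `I - s*s` is invertible, and
`⟨S⁻¹(ℓ' ⊕ ℓ), ℓ' ⊕ ℓ⟩ = ⟨ℓ', ℓ'⟩ + ⟨(I - s*s)⁻¹(ℓ - s*ℓ'), ℓ - s*ℓ'⟩`. -/
theorem blockOp_inv_inner_first
    (L L' : Type*) [NormedAddCommGroup L] [InnerProductSpace ℂ L] [CompleteSpace L]
    [NormedAddCommGroup L'] [InnerProductSpace ℂ L'] [CompleteSpace L']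
    (s : L →L[ℂ] L') (hs : ‖s‖ < 1) :
    IsUnit (blockOp L L' s) ∧ IsUnit (1 - ContinuousLinearMap.adjoint s ∘L s) ∧
      ∀ (ℓ' : L') (ℓ : L),
        ⟪Ring.inverse (blockOp L L' s) ((WithLp.equiv 2 (L' × L)).symm (ℓ', ℓ)),
            (WithLp.equiv 2 (L' × L)).symm (ℓ', ℓ)⟫_ℂ
          = ⟪ℓ', ℓ'⟫_ℂ
            + ⟪Ring.inverse (1 - ContinuousLinearMap.adjoint s ∘L s)
                  (ℓ - ContinuousLinearMap.adjoint s ℓ'),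
                ℓ - ContinuousLinearMap.adjoint s ℓ'⟫_ℂ := by
  set a := ContinuousLinearMap.adjoint s with ha
  have hnorm : ‖a ∘L s‖ < 1 := by
    rw [ha, ContinuousLinearMap.norm_adjoint_comp_self]
    nlinarith [norm_nonneg s]
  set d : L →L[ℂ] L := 1 - a ∘L s with hdd
  have hd : IsUnit d := by
    have := (Units.oneSub (a ∘L s) hnorm).isUnit
    rwa [Units.val_oneSub] at this
  set g : L →L[ℂ] L := Ring.inverse d with hg
  have hgd : g ∘L d = 1 := Ring.inverse_mul_cancel d hd
  have hdg : d ∘L g = 1 := Ring.mul_inverse_cancel d hd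
  have hgd' : ∀ y, g (d y) = y := fun y => by
    have := congrFun (congrArg DFunLike.coe hgd) y
    simpa using this
  have hdg' : ∀ y, d (g y) = y := fun y => by
    have := congrFun (congrArg DFunLike.coe hdg) y
    simpa using this
  have hgd'' : ∀ y, g y - g ((a ∘L s) y) = y := fun y => by
    have := hgd' y
    simpa [hdd, map_sub, sub_eq_iff_eq_add] using this
  have hdg'' : ∀ y, g y - (a ∘L s) (g y) = y := fun y => by
    have := hdg' y
    simpa [hdd] using this
  have hA : ∀ y, a (s (g y)) = g y - y := fun y => by
    have := hdg'' y; rw [ContinuousLinearMap.comp_apply] at this; linear_combination (norm := abel) -this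
  have hB : ∀ y, g (a (s y)) = g y - y := fun y => by
    have := hgd'' y; rw [ContinuousLinearMap.comp_apply] at this; linear_combination (norm := abel) -this
  -- explicit inverse
  letI e := WithLp.prodContinuousLinearEquiv 2 ℂ L' L
  set T : WithLp 2 (L' × L) →L[ℂ] WithLp 2 (L' × L) :=
    (e.symm.toContinuousLinearMap) ∘L
      (((ContinuousLinearMap.fst ℂ L' L
          + (s ∘L g) ∘L (a ∘L ContinuousLinearMap.fst ℂ L' L - ContinuousLinearMap.snd ℂ L' L)).prod
        (g ∘L (ContinuousLinearMap.snd ℂ L' L - a ∘L ContinuousLinearMap.fst ℂ L' L)))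
        ∘L e.toContinuousLinearMap) with hT
  have hST : blockOp L L' s * T = 1 := by
    ext x
    simp [blockOp, hT, e, map_sub, map_add, hA, hB, ContinuousLinearMap.mul_apply,
      Equiv.symm_apply_eq, Prod.ext_iff, WithLp.ext_iff, ← ha]
    try constructor <;> abel
  have hTS : T * blockOp L L' s = 1 := by
    ext x
    simp [blockOp, hT, e, map_sub, map_add, hA, hB, ContinuousLinearMap.mul_apply,
      Equiv.symm_apply_eq, Prod.ext_iff, WithLp.ext_iff, ← ha]
    try constructor <;> abel
  set U : (WithLp 2 (L' × L) →L[ℂ] WithLp 2 (L' × L))ˣ := ⟨blockOp L L' s, T, hST, hTS⟩ with hU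
  refine ⟨U.isUnit, hd, fun ℓ' ℓ => ?_⟩
  have hinv : Ring.inverse (blockOp L L' s) = T := by
    have : Ring.inverse (U : WithLp 2 (L' × L) →L[ℂ] WithLp 2 (L' × L)) = ↑U⁻¹ :=
      Ring.inverse_unit U
    simpa [hU] using this
  rw [hinv]
  have hkey : ∀ (y : L) (z : L'), ⟪s y, z⟫_ℂ = ⟪y, a z⟫_ℂ := fun y z => by
    rw [ha, ContinuousLinearMap.adjoint_inner_right]
  simp only [hT, e, ContinuousLinearMap.coe_comp', Function.comp_apply,
    ContinuousLinearEquiv.coe_coe, WithLp.prodContinuousLinearEquiv_apply,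
    WithLp.prodContinuousLinearEquiv_symm_apply, WithLp.equiv_symm_apply, WithLp.ofLp_toLp,
    Equiv.apply_symm_apply, ContinuousLinearMap.prod_apply, ContinuousLinearMap.add_apply,
    ContinuousLinearMap.sub_apply, ContinuousLinearMap.coe_fst', ContinuousLinearMap.coe_snd',
    WithLp.prod_inner_apply]
  simp only [map_sub, inner_add_left, inner_sub_left, inner_sub_right, hkey]
  ring
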